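/- Let $S \subseteq \mathbb{R}$, let $S^+ = \{x \in S : x > 0\}$ and $S^- = \{x \in S : x < 0\}$, and suppose both $S^+$ and $S^-$ have strictly positive Lebesgue measure. Then the additive semigroup $H_0$ generated by $S$ (all finite sums of elements of $S$ with positive integer multiplicities) is dense in $\mathbb{R}$. -/

import Mathlib

open MeasureTheory Set
open scoped ENNReal Pointwise

/-- Positive multiples stay in an additive subsemigroup. -/
lemma aux_nsmul_mem (H : AddSubsemigroup ℝ) {x : ℝ} (hx : x ∈ H) :
    ∀ n : ℕ, n ≠ 0 → n • x ∈ H := by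
  intro n hn
  induction n with
  | zero => exact absurd rfl hn
  | succ m ih =>
    rcases Nat.eq_zero_or_pos m with hm | hm
    · subst hm; simpa using hx
    · have := ih hm.ne'
      rw [succ_nsmul]
      exact H.add_mem this hx

/-- Fubini: some translate of `B` meets `A` in positive measure. -/
lemma aux_exists_translate (A B : Set ℝ) (hA : MeasurableSet A) (hB : MeasurableSet B)
    (hA0 : 0 < volume A) (hB0 : 0 < volume B) :
    ∃ x : ℝ, 0 < volume (A ∩ {y | y - x ∈ B}) := by
  by_contra hcon
  push_neg at hcon
  have hzero : ∀ x : ℝ, volume (A ∩ {y | y - x ∈ B}) = 0 := fun x =>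
    le_antisymm (hcon x) zero_le
  set f : ℝ → ℝ → ℝ≥0∞ := fun x y => A.indicator 1 y * B.indicator 1 (y - x) with hf
  have hmeas : Measurable (Function.uncurry f) := by
    apply Measurable.mul
    · exact ((measurable_one.indicator hA).comp measurable_snd)
    · exact ((measurable_one.indicator hB).comp (measurable_snd.sub measurable_fst))
  have hinner : ∀ x : ℝ, (∫⁻ y, f x y) = volume (A ∩ {y | y - x ∈ B}) := by
    intro x
    have hset : MeasurableSet (A ∩ {y : ℝ | y - x ∈ B}) :=
      hA.inter ((measurable_id.sub_const x) hB)
    rw [← lintegral_indicator_one hset]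
    congr 1
    ext y
    by_cases hyA : y ∈ A <;> by_cases hyB : y - x ∈ B <;>
      simp [hf, Set.indicator_apply, hyA, hyB, Set.mem_inter_iff]
  have hswap : (∫⁻ x, ∫⁻ y, f x y) = ∫⁻ y, ∫⁻ x, f x y :=
    lintegral_lintegral_swap hmeas.aemeasurable
  have hinner2 : ∀ y : ℝ, (∫⁻ x, f x y) = A.indicator 1 y * volume B := by
    intro y
    have hg : Measurable (fun x : ℝ => B.indicator (1 : ℝ → ℝ≥0∞) (y - x)) :=
      (measurable_one.indicator hB).comp (measurable_const.sub measurable_id)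
    rw [hf]
    simp only
    rw [lintegral_const_mul _ hg]
    congr 1
    have hmp : MeasurePreserving (fun x : ℝ => y - x) volume volume :=
      Measure.measurePreserving_sub_left volume y
    have h2 := hmp.lintegral_comp (f := B.indicator 1) (measurable_one.indicator hB)
    rw [h2, lintegral_indicator_one hB]
  have hleft : (∫⁻ x, ∫⁻ y, f x y) = 0 := by
    simp only [hinner, hzero, lintegral_zero]
  have hright : (∫⁻ y, ∫⁻ x, f x y) = volume A * volume B := by
    simp only [hinner2]
    rw [lintegral_mul_const _ (measurable_one.indicator hA), lintegral_indicator_one hA]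
  rw [hswap, hright] at hleft
  exact absurd hleft (ENNReal.mul_pos hA0.ne' hB0.ne').ne'

/-- The sumset of the positive and negative parts contains an interval. -/
lemma aux_interval (S : Set ℝ) (hS : MeasurableSet S)
    (hpos : 0 < volume (S ∩ Ioi (0 : ℝ)))
    (hneg : 0 < volume (S ∩ Iio (0 : ℝ))) :
    ∃ u v : ℝ, u < v ∧ ∀ z ∈ Ioo u v, ∃ a ∈ S ∩ Ioi (0:ℝ), ∃ b ∈ S ∩ Iio (0:ℝ), z = a + b := by
  set A := S ∩ Ioi (0:ℝ) with hAdef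
  set B := S ∩ Iio (0:ℝ) with hBdef
  have hAm : MeasurableSet A := hS.inter measurableSet_Ioi
  have hBm : MeasurableSet B := hS.inter measurableSet_Iio
  set N : Set ℝ := Neg.neg ⁻¹' B with hNdef
  have hNm : MeasurableSet N := measurable_neg hBm
  have hN0 : 0 < volume N := by
    have : volume N = volume B :=
      (Measure.measurePreserving_neg (volume : Measure ℝ)).measure_preimage hBm.nullMeasurableSet
    rw [this]; exact hneg
  obtain ⟨x, hx⟩ := aux_exists_translate A N hAm hNm hpos hN0
  set E : Set ℝ := A ∩ {y | y - x ∈ N} with hEdef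
  have hEm : MeasurableSet E := hAm.inter ((measurable_id.sub_const x) hNm)
  have hsub : E - E ∈ nhds (0 : ℝ) :=
    MeasureTheory.Measure.sub_mem_nhds_zero_of_addHaar_pos volume E hEm hx
  obtain ⟨δ, hδ, hball⟩ := Metric.mem_nhds_iff.1 hsub
  refine ⟨x - δ, x + δ, by linarith, ?_⟩
  intro z hz
  have hzx : z - x ∈ Metric.ball (0:ℝ) δ := by
    rw [Metric.mem_ball, Real.dist_eq, sub_zero]
    rw [mem_Ioo] at hz
    rw [abs_lt]; constructor <;> linarith [hz.1, hz.2]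
  have hzE : z - x ∈ E - E := hball hzx
  rw [Set.mem_sub] at hzE
  obtain ⟨e₁, he₁, e₂, he₂, heq⟩ := hzE
  refine ⟨e₁, he₁.1, x - e₂, ?_, by linarith [heq]⟩
  have : e₂ - x ∈ N := he₂.2
  rw [hNdef, Set.mem_preimage] at this
  simpa [neg_sub] using this

/-- If both the positive part and the negative part of a Borel set `S ⊆ ℝ` have strictly
positive Lebesgue measure, then the additive semigroup generated by `S` is dense in `ℝ`. -/
theorem stmt_3 (S : Set ℝ) (hS : MeasurableSet S)
    (hpos : 0 < volume (S ∩ Ioi (0 : ℝ)))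
    (hneg : 0 < volume (S ∩ Iio (0 : ℝ))) :
    Dense ((AddSubsemigroup.closure S : AddSubsemigroup ℝ) : Set ℝ) := by
  set H := AddSubsemigroup.closure S with hHdef
  -- a positive element of H
  obtain ⟨p, hpS, hp0⟩ := nonempty_of_measure_ne_zero hpos.ne'
  have hpH : p ∈ H := AddSubsemigroup.subset_closure hpS
  rw [Set.mem_Ioi] at hp0
  -- a negative element of H
  obtain ⟨q, hqS, hq0⟩ := nonempty_of_measure_ne_zero hneg.ne'
  have hqH : q ∈ H := AddSubsemigroup.subset_closure hqS
  rw [Set.mem_Iio] at hq0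
  -- an interval inside H
  obtain ⟨u, v, huv, hIoo⟩ := aux_interval S hS hpos hneg
  have hIooH : Ioo u v ⊆ (H : Set ℝ) := by
    intro z hz
    obtain ⟨a, ha, b, hb, rfl⟩ := hIoo z hz
    exact H.add_mem (AddSubsemigroup.subset_closure ha.1) (AddSubsemigroup.subset_closure hb.1)
  -- translate interval to the positive side
  have htrans : ∀ n : ℕ, ∀ z ∈ Ioo (u + n * p) (v + n * p), z ∈ H := by
    intro n z hz
    rcases Nat.eq_zero_or_pos n with hn | hn
    · subst hn; simp only [Nat.cast_zero, zero_mul, add_zero] at hz; exact hIooH hz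
    · have h1 : z - n * p ∈ Ioo u v := by
        rw [mem_Ioo] at hz ⊢; constructor <;> linarith [hz.1, hz.2]
      have h2 : (n : ℝ) * p = n • p := by rw [nsmul_eq_mul]
      have h3 : (n • p : ℝ) ∈ H := aux_nsmul_mem H hpH n hn.ne'
      rw [← h2] at h3
      have heq : z = (z - n * p) + n * p := by ring
      rw [heq]
      exact H.add_mem (hIooH h1) h3
  -- a positive interval inside H
  obtain ⟨n, hn⟩ := exists_nat_gt (-u / p)
  set a := u + n * p with hadef
  set b := v + n * p with hbdef
  have ha0 : 0 < a := by
    have h := (div_lt_iff₀ hp0).1 hn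
    rw [hadef]; linarith
  have hab : a < b := by rw [hadef, hbdef]; linarith
  have haH : Ioo a b ⊆ (H : Set ℝ) := fun z hz => htrans n z hz
  have hb0 : 0 < b := lt_trans ha0 hab
  -- a ray inside H
  set T := a * b / (b - a) with hTdef
  have hT0 : 0 < T := div_pos (mul_pos ha0 hb0) (by linarith)
  have hray : ∀ z : ℝ, T < z → z ∈ H := by
    intro z hz
    have hz0 : 0 < z := lt_trans hT0 hz
    set m : ℕ := Nat.floor (z / b) + 1 with hmdef
    have hm1 : (1 : ℕ) ≤ m := Nat.le_add_left 1 _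
    have hmub : z / b < m := by
      have := Nat.lt_floor_add_one (z / b)
      simpa [hmdef] using this
    have hmlb : (m : ℝ) ≤ z / b + 1 := by
      have := Nat.floor_le (le_of_lt (div_pos hz0 hb0))
      simp only [hmdef, Nat.cast_add, Nat.cast_one]
      linarith
    -- z / b + 1 < z / a
    have hkey : z / b + 1 < z / a := by
      rw [div_add' _ _ _ hb0.ne', div_lt_div_iff₀ hb0 ha0]
      have hTz : a * b < z * (b - a) := by
        rw [hTdef] at hz
        calc a * b = (a * b / (b - a)) * (b - a) :=
              (div_mul_cancel₀ (a * b) (by linarith : b - a ≠ 0)).symm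
        _ < z * (b - a) := by
            apply mul_lt_mul_of_pos_right hz; linarith
      nlinarith
    have hma : (m : ℝ) < z / a := lt_of_le_of_lt hmlb hkey
    have hm0 : (0 : ℝ) < m := by exact_mod_cast Nat.lt_of_lt_of_le Nat.zero_lt_one hm1
    have h1 : (m : ℝ) * a < z := by
      have := (lt_div_iff₀ ha0).1 hma; linarith
    have h2 : z < (m : ℝ) * b := by
      have := (div_lt_iff₀ hb0).1 hmub; linarith
    have hzm : z / m ∈ Ioo a b := by
      rw [mem_Ioo]
      constructor
      · rw [lt_div_iff₀ hm0]; linarith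
      · rw [div_lt_iff₀ hm0]; linarith
    have hmemH : (z / m : ℝ) ∈ H := haH hzm
    have := aux_nsmul_mem H hmemH m (by omega)
    have heq : (m : ℕ) • (z / m : ℝ) = z := by
      rw [nsmul_eq_mul]
      field_simp
    rwa [heq] at this
  -- every real is in H
  have hall : ∀ z : ℝ, z ∈ H := by
    intro z
    obtain ⟨m, hm⟩ := exists_nat_gt ((T - z) / (-q))
    set m' : ℕ := m + 1 with hm'def
    have hq0' : (0 : ℝ) < -q := by linarith
    have hm' : (T - z) / (-q) < m' := by
      have : (m : ℝ) ≤ (m' : ℝ) := by exact_mod_cast Nat.le_succ m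
      linarith
    have hbig : T < z - m' * q := by
      have := (div_lt_iff₀ hq0').1 hm'
      nlinarith
    have h1 : (z - m' * q : ℝ) ∈ H := hray _ hbig
    have h2 : ((m' : ℕ) • q : ℝ) ∈ H := aux_nsmul_mem H hqH m' (by omega)
    have heq : z = (z - m' * q) + (m' : ℕ) • q := by
      rw [nsmul_eq_mul]; ring
    rw [heq]
    exact H.add_mem h1 h2
  intro x
  exact subset_closure (hall x)
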